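/- Let m ≥ 2 be an integer, let p be a probability vector on {1,…,m} and let (X_t)_{t≥1} be i.i.d. samples from p. Let p̂_n be the empirical probability vector after n samples, p̂_{n,k} = (1/n) Σ_{ℓ=1}^n 1{X_ℓ = k}. Then for every δ ∈ (0,1], P( ∃ n ∈ ℕ* : n · KL(p̂_n , p) > log(1/δ) + (m−1) · log( e · (1 + n/(m−1)) ) ) ≤ δ. -/

import Mathlib

open Finset MeasureTheory ProbabilityTheory

/-- Kullback–Leibler divergence between two finitely supported distributions, with the
conventions `0 · log(0/x) = 0` and `KL(p,q) = +∞` when `p(s) > 0` while `q(s) = 0`. -/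
noncomputable def KLdiv {S : Type*} [Fintype S] (p q : S → ℝ) : EReal :=
  ∑ s, if p s = 0 then (0 : EReal)
    else if q s = 0 then (⊤ : EReal)
    else ((p s * Real.log (p s / q s) : ℝ) : EReal)

namespace KLDeviationProof

/-! ### Counting functions -/

/-- count of symbol `k` among the first `n` values of `x` -/
def cnt {m : ℕ} (x : ℕ → Fin m) (n : ℕ) (k : Fin m) : ℕ :=
  ∑ ℓ ∈ Finset.range n, if x ℓ = k then 1 else 0

lemma cnt_congr {m : ℕ} {x y : ℕ → Fin m} {n : ℕ} (h : ∀ ℓ < n, x ℓ = y ℓ) :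
    cnt x n = cnt y n := by
  funext k
  exact Finset.sum_congr rfl fun ℓ hℓ => by rw [h ℓ (Finset.mem_range.1 hℓ)]

lemma cnt_sum {m : ℕ} [NeZero m] (x : ℕ → Fin m) (n : ℕ) :
    ∑ k, cnt x n k = n := by
  unfold cnt
  rw [Finset.sum_comm]
  simp

lemma cnt_succ {m : ℕ} (x : ℕ → Fin m) (n : ℕ) (k : Fin m) :
    cnt x (n + 1) k = cnt x n k + if x n = k then 1 else 0 := Finset.sum_range_succ _ _

lemma cnt_pos_elim {m : ℕ} {x : ℕ → Fin m} {n : ℕ} {k : Fin m} (h : cnt x n k ≠ 0) :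
    ∃ ℓ < n, x ℓ = k := by
  by_contra hc
  push_neg at hc
  apply h
  refine Finset.sum_eq_zero fun ℓ hℓ => ?_
  simp [hc ℓ (Finset.mem_range.1 hℓ)]

lemma cnt_cast {m : ℕ} (x : ℕ → Fin m) (n : ℕ) (k : Fin m) :
    ((cnt x n k : ℕ) : ℝ) = ∑ ℓ ∈ Finset.range n, if x ℓ = k then (1 : ℝ) else 0 := by
  unfold cnt
  rw [Nat.cast_sum]
  exact Finset.sum_congr rfl fun ℓ _ => by split <;> simp

/-! ### The mixture martingale -/

/-- the Dirichlet(1,...,1) mixture likelihood-ratio martingale, in closed form -/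
noncomputable def Mart {m : ℕ} (p : Fin m → ℝ) (x : ℕ → Fin m) (n : ℕ) : ℝ :=
  (((m - 1).factorial * ∏ k, (cnt x n k).factorial : ℕ) : ℝ) /
    (((n + m - 1).factorial : ℝ) * ∏ k, (p k) ^ (cnt x n k))

lemma Mart_nonneg {m : ℕ} {p : Fin m → ℝ} (hp : ∀ k, 0 ≤ p k) (x : ℕ → Fin m) (n : ℕ) :
    0 ≤ Mart p x n := by
  apply div_nonneg (by positivity)
  exact mul_nonneg (by positivity) (Finset.prod_nonneg fun k _ => pow_nonneg (hp k) _)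

lemma Mart_zero {m : ℕ} (p : Fin m → ℝ) (x : ℕ → Fin m) : Mart p x 0 = 1 := by
  unfold Mart cnt
  simp only [Finset.range_zero, Finset.sum_empty, Nat.factorial_zero, Finset.prod_const_one,
    mul_one, Nat.zero_add, pow_zero, Nat.cast_mul]
  rw [div_self]
  positivity

lemma Mart_congr {m : ℕ} (p : Fin m → ℝ) {x y : ℕ → Fin m} {n : ℕ}
    (h : ∀ ℓ < n, x ℓ = y ℓ) : Mart p x n = Mart p y n := by
  unfold Mart
  rw [cnt_congr h]

lemma cnt_update_succ {m : ℕ} (x : ℕ → Fin m) (n : ℕ) (a k : Fin m) :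
    cnt (Function.update x n a) (n + 1) k = cnt x n k + if a = k then 1 else 0 := by
  have h := cnt_congr (x := Function.update x n a) (y := x) (n := n)
    (fun ℓ hℓ => Function.update_of_ne (by omega) _ _)
  rw [cnt_succ, Function.update_self, h]

lemma Mart_step_term {m : ℕ} {p : Fin m → ℝ} (hp : ∀ k, 0 ≤ p k) (hm : 2 ≤ m)
    (x : ℕ → Fin m) (n : ℕ) (a : Fin m) :
    p a * Mart p (Function.update x n a) (n + 1)
      ≤ Mart p x n * (((cnt x n a + 1 : ℕ) : ℝ) / ((n : ℝ) + m)) := by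
  have hnum : ∏ k, (cnt (Function.update x n a) (n + 1) k).factorial
      = (cnt x n a + 1) * ∏ k, (cnt x n k).factorial := by
    simp only [cnt_update_succ]
    rw [Finset.prod_eq_mul_prod_sdiff_singleton_of_mem (Finset.mem_univ a),
      Finset.prod_eq_mul_prod_sdiff_singleton_of_mem (Finset.mem_univ a) (fun k => (cnt x n k).factorial)]
    rw [if_pos rfl, Nat.factorial_succ]
    rw [Finset.prod_congr rfl (fun k hk => by
      rw [if_neg (by simpa [eq_comm] using (Finset.mem_sdiff.1 hk).2), Nat.add_zero])]
    ring
  have hden : ∏ k, p k ^ (cnt (Function.update x n a) (n + 1) k)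
      = p a * ∏ k, p k ^ (cnt x n k) := by
    simp only [cnt_update_succ]
    rw [Finset.prod_eq_mul_prod_sdiff_singleton_of_mem (Finset.mem_univ a),
      Finset.prod_eq_mul_prod_sdiff_singleton_of_mem (Finset.mem_univ a) (fun k => p k ^ (cnt x n k))]
    rw [if_pos rfl, pow_succ]
    rw [Finset.prod_congr rfl (fun k hk => by
      rw [if_neg (by simpa [eq_comm] using (Finset.mem_sdiff.1 hk).2), Nat.add_zero])]
    ring
  have hfac : (n + 1 + m - 1).factorial = (n + m) * (n + m - 1).factorial := by
    have h1 : n + 1 + m - 1 = (n + m - 1) + 1 := by omega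
    have h2 : n + m - 1 + 1 = n + m := by omega
    rw [h1, Nat.factorial_succ, h2]
  unfold Mart
  rw [hnum, hden, hfac]
  rcases eq_or_lt_of_le (hp a) with hpa | hpa
  · rw [← hpa]
    simp only [zero_mul]
    exact mul_nonneg (Mart_nonneg hp x n) (div_nonneg (Nat.cast_nonneg _) (by positivity))
  rcases eq_or_ne (∏ k, p k ^ (cnt x n k)) 0 with hB | hB
  · rw [hB]
    simp
  · have hD : ((n + m - 1).factorial : ℝ) ≠ 0 := by positivity
    have hnm : ((n : ℝ) + m) ≠ 0 := by positivity
    apply le_of_eq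
    push_cast
    field_simp

lemma Mart_step {m : ℕ} {p : Fin m → ℝ} (hp : ∀ k, 0 ≤ p k) (hm : 2 ≤ m)
    (x : ℕ → Fin m) (n : ℕ) :
    ∑ a, p a * Mart p (Function.update x n a) (n + 1) ≤ Mart p x n := by
  haveI : NeZero m := ⟨by omega⟩
  calc ∑ a, p a * Mart p (Function.update x n a) (n + 1)
      ≤ ∑ a, Mart p x n * (((cnt x n a + 1 : ℕ) : ℝ) / ((n : ℝ) + m)) :=
        Finset.sum_le_sum fun a _ => Mart_step_term hp hm x n a
    _ = Mart p x n := by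
        rw [← Finset.mul_sum, ← Finset.sum_div]
        have h1 : ∑ a, ((cnt x n a + 1 : ℕ) : ℝ) = (n : ℝ) + m := by
          rw [← Nat.cast_sum]
          norm_cast
          rw [Finset.sum_add_distrib, cnt_sum]
          simp
        rw [h1, div_self (by positivity), mul_one]

/-! ### The stopped martingale -/

/-- hit: the martingale reached level 1/δ at some time ≤ N -/
def hitB {m : ℕ} (p : Fin m → ℝ) (δ : ℝ) (N : ℕ) (x : ℕ → Fin m) : Prop :=
  ∃ n ≤ N, 1 / δ ≤ Mart p x n

open Classical in
/-- the stopped martingale (stopped upon reaching 1/δ, or at time N) -/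
noncomputable def VV {m : ℕ} (p : Fin m → ℝ) (δ : ℝ) : ℕ → (ℕ → Fin m) → ℝ
  | 0, _ => 1
  | N + 1, x => if hitB p δ N x then VV p δ N x else Mart p x (N + 1)

lemma hitB_congr {m : ℕ} (p : Fin m → ℝ) (δ : ℝ) {N : ℕ} {x y : ℕ → Fin m}
    (h : ∀ ℓ < N, x ℓ = y ℓ) : hitB p δ N x ↔ hitB p δ N y := by
  unfold hitB
  refine exists_congr fun n => and_congr_right fun hn => ?_
  rw [Mart_congr p (fun ℓ hℓ => h ℓ (lt_of_lt_of_le hℓ hn))]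

lemma VV_congr {m : ℕ} (p : Fin m → ℝ) (δ : ℝ) {N : ℕ} {x y : ℕ → Fin m}
    (h : ∀ ℓ < N, x ℓ = y ℓ) : VV p δ N x = VV p δ N y := by
  induction N with
  | zero => rfl
  | succ N ih =>
    have h' : ∀ ℓ < N, x ℓ = y ℓ := fun ℓ hℓ => h ℓ (by omega)
    unfold VV
    by_cases hc : hitB p δ N x
    · rw [if_pos hc, if_pos ((hitB_congr p δ h').1 hc), ih h']
    · rw [if_neg hc, if_neg (fun hy => hc ((hitB_congr p δ h').2 hy)), Mart_congr p h]

lemma VV_nonneg {m : ℕ} {p : Fin m → ℝ} (hp : ∀ k, 0 ≤ p k) (δ : ℝ) (N : ℕ) (x : ℕ → Fin m) :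
    0 ≤ VV p δ N x := by
  induction N with
  | zero => exact zero_le_one
  | succ N ih =>
    unfold VV
    split
    · exact ih
    · exact Mart_nonneg hp x _

lemma VV_eq_Mart {m : ℕ} (p : Fin m → ℝ) (δ : ℝ) {N : ℕ} {x : ℕ → Fin m}
    (h : ¬ hitB p δ N x) : VV p δ N x = Mart p x N := by
  cases N with
  | zero => exact (Mart_zero p x).symm
  | succ N =>
    unfold VV
    rw [if_neg]
    intro ⟨n, hn, hM⟩
    exact h ⟨n, by omega, hM⟩

lemma VV_ge_of_hit {m : ℕ} (p : Fin m → ℝ) (δ : ℝ) {N : ℕ} {x : ℕ → Fin m}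
    (h : hitB p δ N x) : 1 / δ ≤ VV p δ N x := by
  induction N with
  | zero =>
    obtain ⟨n, hn, hM⟩ := h
    interval_cases n
    simpa [VV, Mart_zero] using hM
  | succ N ih =>
    unfold VV
    split
    · exact ih ‹_›
    · obtain ⟨n, hn, hM⟩ := h
      rcases Nat.lt_or_ge n (N + 1) with h1 | h1
      · exact absurd ⟨n, by omega, hM⟩ ‹¬ hitB p δ N x›
      · have : n = N + 1 := by omega
        subst this
        exact hM

/-! ### Extension of finite tuples -/

/-- extend a finite tuple to ℕ by a junk value -/
def extT {m N : ℕ} (hm : 0 < m) (x : Fin N → Fin m) : ℕ → Fin m :=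
  fun ℓ => if h : ℓ < N then x ⟨ℓ, h⟩ else ⟨0, hm⟩

lemma extT_lt {m N : ℕ} (hm : 0 < m) (x : Fin N → Fin m) (ℓ : Fin N) :
    extT hm x ℓ.1 = x ℓ := by simp [extT]

lemma extT_snoc {m N : ℕ} (hm : 0 < m) (x : Fin N → Fin m) (a : Fin m) :
    extT hm (Fin.snoc x a) = Function.update (extT hm x) N a := by
  funext ℓ
  rcases lt_trichotomy ℓ N with h | h | h
  · rw [Function.update_of_ne (by omega)]
    simp only [extT, dif_pos (show ℓ < N + 1 by omega), dif_pos h]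
    exact Fin.snoc_castSucc (α := fun _ => Fin m) (p := x) (x := a) (i := ⟨ℓ, h⟩)
  · subst h
    rw [Function.update_self]
    simp only [extT, dif_pos (show ℓ < ℓ + 1 by omega)]
    exact Fin.snoc_last (α := fun _ => Fin m) (p := x) (x := a)
  · rw [Function.update_of_ne (by omega)]
    simp only [extT, dif_neg (show ¬ ℓ < N + 1 by omega), dif_neg (show ¬ ℓ < N by omega)]

lemma extT_snoc_agree {m N : ℕ} (hm : 0 < m) (x : Fin N → Fin m) (a : Fin m) :
    ∀ ℓ < N, extT hm (Fin.snoc x a) ℓ = extT hm x ℓ := by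
  intro ℓ hℓ
  rw [extT_snoc, Function.update_of_ne (by omega)]

/-! ### Ville's inequality, finite combinatorial form -/

lemma ville {m : ℕ} {p : Fin m → ℝ} (hp : ∀ k, 0 ≤ p k) (hm : 2 ≤ m)
    (hpsum : ∑ k, p k = 1) (δ : ℝ) :
    ∀ N : ℕ, ∑ x : Fin N → Fin m, (∏ ℓ, p (x ℓ)) * VV p δ N (extT (by omega) x) ≤ 1 := by
  intro N
  induction N with
  | zero =>
    have h1 : ∀ x : Fin 0 → Fin m,
        (∏ ℓ : Fin 0, p (x ℓ)) * VV p δ 0 (extT (by omega) x) = 1 := by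
      intro x
      simp [VV]
    rw [Finset.sum_congr rfl (fun x _ => h1 x), Finset.sum_const, nsmul_eq_mul, mul_one]
    norm_cast
  | succ N ih =>
    have hm0 : 0 < m := by omega
    set F : (Fin (N + 1) → Fin m) → ℝ := fun y =>
      (∏ ℓ, p (y ℓ)) * VV p δ (N + 1) (extT hm0 y) with hF
    have hbij : ∑ y : Fin (N + 1) → Fin m, F y
        = ∑ z : Fin m × (Fin N → Fin m), F (Fin.snoc (α := fun _ => Fin m) z.2 z.1) :=
      (Equiv.sum_comp (Fin.snocEquiv (fun _ : Fin (N + 1) => Fin m)) F).symm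
    show ∑ y : Fin (N + 1) → Fin m, F y ≤ 1
    rw [hbij, Fintype.sum_prod_type_right]
    have key : ∀ x : Fin N → Fin m,
        ∑ a : Fin m, F (Fin.snoc (α := fun _ => Fin m) x a)
          ≤ (∏ ℓ, p (x ℓ)) * VV p δ N (extT hm0 x) := by
      intro x
      have hprod : ∀ a : Fin m,
          (∏ ℓ, p (Fin.snoc (α := fun _ => Fin m) x a ℓ)) = (∏ ℓ, p (x ℓ)) * p a := by
        intro a
        rw [Fin.prod_univ_castSucc (fun ℓ => p (Fin.snoc (α := fun _ => Fin m) x a ℓ))]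
        simp
      by_cases hc : hitB p δ N (extT hm0 x)
      · have h2 : ∀ a : Fin m, F (Fin.snoc (α := fun _ => Fin m) x a)
            = (∏ ℓ, p (x ℓ)) * p a * VV p δ N (extT hm0 x) := by
          intro a
          rw [hF]
          simp only
          rw [hprod a, VV,
            if_pos ((hitB_congr p δ (extT_snoc_agree hm0 x a)).2 hc),
            VV_congr p δ (extT_snoc_agree hm0 x a)]
        rw [Finset.sum_congr rfl (fun a _ => h2 a)]
        apply le_of_eq
        rw [← Finset.sum_mul, ← Finset.mul_sum, hpsum, mul_one]
      · have h2 : ∀ a : Fin m, F (Fin.snoc (α := fun _ => Fin m) x a)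
            = (∏ ℓ, p (x ℓ)) * (p a * Mart p (Function.update (extT hm0 x) N a) (N + 1)) := by
          intro a
          rw [hF]
          simp only
          rw [hprod a, VV,
            if_neg (fun hy => hc ((hitB_congr p δ (extT_snoc_agree hm0 x a)).1 hy)),
            extT_snoc, mul_assoc]
        rw [Finset.sum_congr rfl (fun a _ => h2 a), ← Finset.mul_sum]
        rw [VV_eq_Mart p δ hc]
        exact mul_le_mul_of_nonneg_left (Mart_step hp hm (extT hm0 x) N)
          (Finset.prod_nonneg fun ℓ _ => hp _)
    calc ∑ x : Fin N → Fin m, ∑ a : Fin m, F (Fin.snoc (α := fun _ => Fin m) x a)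
        ≤ ∑ x : Fin N → Fin m, (∏ ℓ, p (x ℓ)) * VV p δ N (extT hm0 x) :=
          Finset.sum_le_sum fun x _ => key x
      _ ≤ 1 := ih

/-! ### Combinatorial inequalities -/

lemma multinomial_mul_pow_le {α : Type*} [DecidableEq α] (s : Finset α) (f : α → ℕ) :
    Nat.multinomial s f * ∏ i ∈ s, f i ^ f i ≤ (∑ i ∈ s, f i) ^ (∑ i ∈ s, f i) := by
  induction s using Finset.induction with
  | empty => simp
  | @insert a s ha ih =>
    rw [Nat.multinomial_insert ha, Finset.prod_insert ha, Finset.sum_insert ha]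
    set A := f a
    set B := ∑ i ∈ s, f i
    calc (A + B).choose A * Nat.multinomial s f * (A ^ A * ∏ i ∈ s, f i ^ f i)
        = (A + B).choose A * A ^ A * (Nat.multinomial s f * ∏ i ∈ s, f i ^ f i) := by ring
      _ ≤ (A + B).choose A * A ^ A * B ^ B := Nat.mul_le_mul_left _ ih
      _ ≤ (A + B) ^ (A + B) := by
          have hmem : A ∈ Finset.range (A + B + 1) := by
            simp
          calc (A + B).choose A * A ^ A * B ^ B
              = A ^ A * B ^ (A + B - A) * (A + B).choose A := by
                rw [Nat.add_sub_cancel_left]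
                ring
            _ ≤ ∑ i ∈ Finset.range (A + B + 1), A ^ i * B ^ (A + B - i) * (A + B).choose i :=
                Finset.single_le_sum
                  (f := fun i => A ^ i * B ^ (A + B - i) * (A + B).choose i)
                  (fun i _ => Nat.zero_le _) hmem
            _ = (A + B) ^ (A + B) := (add_pow A B (A + B)).symm

lemma pow_self_le_exp_mul_factorial (r : ℕ) :
    (r : ℝ) ^ r ≤ Real.exp r * r.factorial := by
  have h1 : (r : ℝ) ^ r / r.factorial ≤ Real.exp r := by
    calc (r : ℝ) ^ r / r.factorial
        ≤ ∑ i ∈ Finset.range (r + 1), (r : ℝ) ^ i / i.factorial :=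
          Finset.single_le_sum (f := fun i => (r : ℝ) ^ i / (i.factorial : ℝ))
            (fun i _ => by positivity) (Finset.self_mem_range_succ r)
      _ ≤ Real.exp r := Real.sum_le_exp_of_nonneg (by positivity) _
  calc (r : ℝ) ^ r = ((r : ℝ) ^ r / r.factorial) * r.factorial := by field_simp
    _ ≤ Real.exp r * r.factorial := mul_le_mul_of_nonneg_right h1 (by positivity)

lemma choose_le_bound (n r : ℕ) (hr : 1 ≤ r) :
    ((n + r).choose r : ℝ) ≤ (Real.exp 1 * ((n + r : ℕ) : ℝ) / r) ^ r := by
  have hr0 : (0 : ℝ) < r := by positivity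
  have hfac : (0 : ℝ) < r.factorial := by positivity
  have h1 : ((n + r).choose r : ℝ) * r.factorial ≤ ((n + r : ℕ) : ℝ) ^ r := by
    rw [← Nat.cast_mul]
    norm_cast
    calc (n + r).choose r * r.factorial = (n + r).descFactorial r := by
          rw [Nat.descFactorial_eq_factorial_mul_choose]
          ring
      _ ≤ (n + r) ^ r := Nat.descFactorial_le_pow _ _
  have h2 : ((n + r).choose r : ℝ) ≤ ((n + r : ℕ) : ℝ) ^ r / r.factorial :=
    (le_div_iff₀ hfac).2 h1
  refine h2.trans ?_
  rw [div_pow, mul_pow, ← Real.exp_nat_mul, mul_one]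
  rw [div_le_div_iff₀ hfac (by positivity)]
  calc ((n + r : ℕ) : ℝ) ^ r * (r : ℝ) ^ r
      ≤ ((n + r : ℕ) : ℝ) ^ r * (Real.exp r * r.factorial) :=
        mul_le_mul_of_nonneg_left (pow_self_le_exp_mul_factorial r) (by positivity)
    _ = Real.exp r * ((n + r : ℕ) : ℝ) ^ r * r.factorial := by ring

lemma ereal_coe_sum {α : Type*} (s : Finset α) (f : α → ℝ) :
    ((∑ i ∈ s, f i : ℝ) : EReal) = ∑ i ∈ s, (f i : EReal) :=
  map_sum (⟨⟨Real.toEReal, EReal.coe_zero⟩, EReal.coe_add⟩ : ℝ →+ EReal) f s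

/-! ### The key deterministic chain -/

theorem key_chain {m : ℕ} {p : Fin m → ℝ} (hm : 2 ≤ m)
    {x : ℕ → Fin m} {n : ℕ} (hn : 1 ≤ n)
    (good : ∀ k, cnt x n k ≠ 0 → 0 < p k)
    {δ : ℝ} (hδ : 0 < δ)
    (hev : (((n : ℝ) : EReal) * KLdiv (fun k => ((cnt x n k : ℝ)) / n) p
       > ((Real.log (1 / δ)
            + ((m : ℝ) - 1) * Real.log (Real.exp 1 * (1 + (n : ℝ) / ((m : ℝ) - 1))) : ℝ)
          : EReal))) :
    1 / δ ≤ Mart p x n := by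
  haveI : NeZero m := ⟨by omega⟩
  set r : ℕ := m - 1 with hrdef
  have hr1 : 1 ≤ r := by omega
  have hrcast : ((m : ℝ) - 1) = (r : ℝ) := by
    rw [hrdef]
    push_cast [Nat.cast_sub (by omega : 1 ≤ m)]
    ring
  have hrpos : (0 : ℝ) < r := by positivity
  have hnpos : (0 : ℝ) < n := by positivity
  set c : Fin m → ℕ := cnt x n with hc
  have hcsum : ∑ k, c k = n := cnt_sum x n
  set y : ℝ := 1 + (n : ℝ) / ((m : ℝ) - 1) with hy
  have hypos : 0 < y := by
    rw [hy, hrcast]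
    positivity
  have hey : 0 < Real.exp 1 * y := by positivity
  set Cb : ℝ := (Real.exp 1 * y) ^ r with hCb
  have hCbpos : 0 < Cb := by positivity
  set klterm : Fin m → ℝ := fun k =>
    if c k = 0 then 0 else ((c k : ℝ) / n) * Real.log (((c k : ℝ) / n) / p k) with hklterm
  have hKL : KLdiv (fun k => ((c k : ℝ)) / n) p = ((∑ k, klterm k : ℝ) : EReal) := by
    rw [ereal_coe_sum]
    unfold KLdiv
    refine Finset.sum_congr rfl fun k _ => ?_
    by_cases h0 : c k = 0
    · rw [if_pos (by simp [h0]), hklterm]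
      simp [h0]
    · have hpk : p k ≠ 0 := ne_of_gt (good k h0)
      have hc0 : ((c k : ℝ)) / n ≠ 0 := by positivity
      rw [if_neg hc0, if_neg hpk, hklterm]
      simp [h0]
  rw [hKL, ← EReal.coe_mul] at hev
  replace hev := EReal.coe_lt_coe_iff.1 hev
  have hexp : Real.exp ((n : ℝ) * ∑ k, klterm k)
      = ∏ k, (((c k : ℝ) / n) / p k) ^ (c k) := by
    rw [Finset.mul_sum, Real.exp_sum]
    refine Finset.prod_congr rfl fun k _ => ?_
    by_cases h0 : c k = 0
    · simp [hklterm, h0]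
    · have hpk : 0 < p k := good k h0
      have hq : 0 < ((c k : ℝ) / n) / p k := by
        have : (0 : ℝ) < (c k : ℝ) := by exact_mod_cast Nat.pos_of_ne_zero h0
        positivity
      rw [hklterm]
      simp only [if_neg h0]
      rw [show (n : ℝ) * ((c k : ℝ) / n * Real.log (((c k : ℝ) / n) / p k))
          = (c k : ℝ) * Real.log (((c k : ℝ) / n) / p k) by field_simp,
        ← Real.log_pow, Real.exp_log (by positivity)]
  have hB : 0 < ∏ k, (p k) ^ (c k) := by
    apply Finset.prod_pos
    intro k _
    by_cases h0 : c k = 0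
    · rw [h0]
      simp
    · exact pow_pos (good k h0) _
  have hmain : ∏ k, (((c k : ℝ) / n) / p k) ^ (c k) ≤ Cb * Mart p x n := by
    have hprod : ∏ k, (((c k : ℝ) / n) / p k) ^ (c k)
        = (∏ k, ((c k : ℝ)) ^ (c k)) / (((n : ℝ) ^ n) * ∏ k, (p k) ^ (c k)) := by
      have hnn : ((n : ℝ) ^ n) = ∏ k, (n : ℝ) ^ (c k) := by
        rw [Finset.prod_pow_eq_pow_sum, hcsum]
      rw [hnn, ← Finset.prod_mul_distrib, ← Finset.prod_div_distrib]
      exact Finset.prod_congr rfl fun k _ => by rw [div_pow, div_pow, div_div]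
    have hnat : (n.factorial : ℝ) * ∏ k, ((c k : ℝ)) ^ (c k)
        ≤ ((n : ℝ) ^ n) * ∏ k, ((c k).factorial : ℝ) := by
      have h1 : n.factorial * ∏ k, (c k) ^ (c k) ≤ n ^ n * ∏ k, (c k).factorial := by
        have h2 := multinomial_mul_pow_le Finset.univ c
        rw [hcsum] at h2
        have h3 : (∏ k, (c k).factorial) * Nat.multinomial Finset.univ c = n.factorial := by
          rw [Nat.multinomial_spec, hcsum]
        calc n.factorial * ∏ k, (c k) ^ (c k)
            = (∏ k, (c k).factorial) * (Nat.multinomial Finset.univ c * ∏ k, (c k) ^ (c k)) := by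
              rw [← h3]
              ring
          _ ≤ (∏ k, (c k).factorial) * n ^ n := Nat.mul_le_mul_left _ h2
          _ = n ^ n * ∏ k, (c k).factorial := by ring
      exact_mod_cast h1
    have hfacid : ((n + r).factorial : ℝ)
        = ((n + r).choose r : ℝ) * (r.factorial : ℝ) * (n.factorial : ℝ) := by
      rw [← Nat.cast_mul, ← Nat.cast_mul]
      norm_cast
      have := Nat.choose_mul_factorial_mul_factorial (Nat.le_add_left r n)
      rw [Nat.add_sub_cancel] at this
      exact this.symm
    have hchoose : ((n + r).choose r : ℝ) ≤ Cb := by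
      refine (choose_le_bound n r hr1).trans_eq ?_
      rw [hCb]
      congr 1
      rw [hy, hrcast]
      push_cast
      field_simp
      ring
    have hidx : n + m - 1 = n + r := by omega
    have hidx2 : m - 1 = r := by omega
    rw [Mart, hidx, hidx2, hprod, ← hc]
    rw [div_le_iff₀ (by positivity)]
    rw [show Cb * ((((r).factorial * ∏ k, (c k).factorial : ℕ) : ℝ) /
        (((n + r).factorial : ℝ) * ∏ k, (p k) ^ (c k))) * (((n : ℝ) ^ n) * ∏ k, (p k) ^ (c k))
        = (Cb * (((r).factorial * ∏ k, (c k).factorial : ℕ) : ℝ) * (((n : ℝ) ^ n)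
          * ∏ k, (p k) ^ (c k))) / (((n + r).factorial : ℝ) * ∏ k, (p k) ^ (c k)) by ring]
    rw [le_div_iff₀ (by positivity)]
    push_cast
    calc (∏ k, ((c k : ℝ)) ^ (c k)) * (((n + r).factorial : ℝ) * ∏ k, (p k) ^ (c k))
        = (((n + r).factorial : ℝ)) * (∏ k, ((c k : ℝ)) ^ (c k)) * ∏ k, (p k) ^ (c k) := by
          ring
      _ ≤ (Cb * (r.factorial : ℝ) * (n.factorial : ℝ)) * (∏ k, ((c k : ℝ)) ^ (c k))
            * ∏ k, (p k) ^ (c k) := by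
          apply mul_le_mul_of_nonneg_right _ (le_of_lt hB)
          apply mul_le_mul_of_nonneg_right _ (Finset.prod_nonneg fun k _ => by positivity)
          rw [hfacid]
          apply mul_le_mul_of_nonneg_right _ (by positivity)
          exact mul_le_mul_of_nonneg_right hchoose (by positivity)
      _ = Cb * (r.factorial : ℝ) * ((n.factorial : ℝ) * ∏ k, ((c k : ℝ)) ^ (c k))
            * ∏ k, (p k) ^ (c k) := by ring
      _ ≤ Cb * (r.factorial : ℝ) * (((n : ℝ) ^ n) * ∏ k, ((c k).factorial : ℝ))
            * ∏ k, (p k) ^ (c k) := by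
          apply mul_le_mul_of_nonneg_right _ (le_of_lt hB)
          exact mul_le_mul_of_nonneg_left hnat (by positivity)
      _ = Cb * ((r.factorial : ℝ) * ∏ k, ((c k).factorial : ℝ)) * (((n : ℝ) ^ n)
            * ∏ k, (p k) ^ (c k)) := by ring
  have hthr : Real.exp (Real.log (1 / δ) + ((m : ℝ) - 1) * Real.log (Real.exp 1 * y))
      = (1 / δ) * Cb := by
    rw [Real.exp_add, Real.exp_log (by positivity), hrcast, Real.exp_nat_mul,
      Real.exp_log hey, hCb]
  have h6 : (1 / δ) * Cb < Cb * Mart p x n := by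
    calc (1 / δ) * Cb
        = Real.exp (Real.log (1 / δ) + ((m : ℝ) - 1) * Real.log (Real.exp 1 * y)) := hthr.symm
      _ < Real.exp ((n : ℝ) * ∑ k, klterm k) := Real.exp_lt_exp.2 hev
      _ = ∏ k, (((c k : ℝ) / n) / p k) ^ (c k) := hexp
      _ ≤ Cb * Mart p x n := hmain
  rw [mul_comm] at h6
  exact le_of_lt ((mul_lt_mul_iff_right₀ hCbpos).1 h6)

/-! ### Measure-theoretic reduction -/

lemma measure_eq_sum {Ω : Type*} [MeasurableSpace Ω] (μ : Measure Ω) [IsProbabilityMeasure μ]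
    {m : ℕ} (p : Fin m → ℝ) (X : ℕ → Ω → Fin m) (hXmeas : ∀ t, Measurable (X t))
    (hindep : iIndepFun X μ)
    (hlaw : ∀ t k, μ {ω | X t ω = k} = ENNReal.ofReal (p k))
    (N : ℕ) (Q : (Fin N → Fin m) → Prop) [DecidablePred Q] :
    μ {ω | Q (fun ℓ : Fin N => X ℓ.1 ω)}
      = ∑ x ∈ Finset.univ.filter Q, ∏ ℓ : Fin N, ENNReal.ofReal (p (x ℓ)) := by
  classical
  have hatommeas : ∀ x : Fin N → Fin m,
      MeasurableSet {ω | ∀ ℓ : Fin N, X ℓ.1 ω = x ℓ} := by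
    intro x
    have : {ω | ∀ ℓ : Fin N, X ℓ.1 ω = x ℓ} = ⋂ ℓ : Fin N, (X ℓ.1) ⁻¹' {x ℓ} := by
      ext ω
      simp [Set.mem_iInter, Set.mem_preimage]
    rw [this]
    exact MeasurableSet.iInter fun ℓ => hXmeas _ (measurableSet_singleton _)
  have hatom : ∀ x : Fin N → Fin m,
      μ {ω | ∀ ℓ : Fin N, X ℓ.1 ω = x ℓ} = ∏ ℓ : Fin N, ENNReal.ofReal (p (x ℓ)) := by
    intro x
    set sets : ∀ _ : ℕ, Set (Fin m) :=
      fun i => if h : i < N then {x ⟨i, h⟩} else Set.univ with hsets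
    have h1 : {ω | ∀ ℓ : Fin N, X ℓ.1 ω = x ℓ} = ⋂ i ∈ Finset.range N, X i ⁻¹' sets i := by
      ext ω
      simp only [Set.mem_setOf_eq, Set.mem_iInter, Set.mem_preimage, Finset.mem_range]
      constructor
      · intro h i hi
        rw [hsets]
        simp only [dif_pos hi]
        exact h ⟨i, hi⟩
      · intro h ℓ
        have := h ℓ.1 ℓ.2
        rw [hsets] at this
        simpa [dif_pos ℓ.2] using this
    have h2 := hindep.measure_inter_preimage_eq_mul (Finset.range N)
      (sets := sets) (fun i _ => by
        rw [hsets]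
        by_cases h : i < N
        · simp only [dif_pos h]
          exact measurableSet_singleton _
        · simp only [dif_neg h]
          exact MeasurableSet.univ)
    rw [h1, h2]
    have h3 : ∀ i ∈ Finset.range N,
        μ (X i ⁻¹' sets i)
          = (fun i => if h : i < N then ENNReal.ofReal (p (x ⟨i, h⟩)) else 1) i := by
      intro i hi
      have hi' : i < N := Finset.mem_range.1 hi
      rw [hsets]
      simp only [dif_pos hi']
      rw [← hlaw i (x ⟨i, hi'⟩)]
      rfl
    rw [Finset.prod_congr rfl h3, ← Fin.prod_univ_eq_prod_range]
    exact Finset.prod_congr rfl fun ℓ _ => by simp [ℓ.2]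
  have hunion : {ω | Q (fun ℓ : Fin N => X ℓ.1 ω)}
      = ⋃ x ∈ Finset.univ.filter Q, {ω | ∀ ℓ : Fin N, X ℓ.1 ω = x ℓ} := by
    ext ω
    simp only [Set.mem_setOf_eq, Set.mem_iUnion, Finset.mem_filter, Finset.mem_univ, true_and]
    constructor
    · intro h
      exact ⟨fun ℓ => X ℓ.1 ω, h, fun ℓ => rfl⟩
    · rintro ⟨x, hx, hall⟩
      have : (fun ℓ : Fin N => X ℓ.1 ω) = x := funext hall
      rwa [this]
  have hdisj : (↑(Finset.univ.filter Q) : Set (Fin N → Fin m)).PairwiseDisjoint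
      (fun x => {ω | ∀ ℓ : Fin N, X ℓ.1 ω = x ℓ}) := by
    intro x _ y _ hxy
    refine Set.disjoint_left.2 fun ω hx hy => hxy ?_
    funext ℓ
    rw [← hx ℓ, ← hy ℓ]
  rw [hunion, measure_biUnion_finset hdisj (fun x _ => hatommeas x)]
  exact Finset.sum_congr rfl fun x _ => hatom x

end KLDeviationProof
namespace KLDeviationProof

/-- the deviation event at time `n` -/
def Ev {m : ℕ} (p : Fin m → ℝ) (δ : ℝ) (n : ℕ) (x : ℕ → Fin m) : Prop :=
  (((n : ℝ) : EReal) *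
      KLdiv (fun k => (∑ ℓ ∈ Finset.range n, if x ℓ = k then (1 : ℝ) else 0) / n) p
    > ((Real.log (1 / δ)
        + ((m : ℝ) - 1) * Real.log (Real.exp 1 * (1 + (n : ℝ) / ((m : ℝ) - 1))) : ℝ)
          : EReal))

lemma Ev_congr {m : ℕ} (p : Fin m → ℝ) (δ : ℝ) (n : ℕ) {x y : ℕ → Fin m}
    (h : ∀ ℓ < n, x ℓ = y ℓ) : Ev p δ n x ↔ Ev p δ n y := by
  unfold Ev
  have : (fun k => (∑ ℓ ∈ Finset.range n, if x ℓ = k then (1 : ℝ) else 0) / n)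
      = (fun k => (∑ ℓ ∈ Finset.range n, if y ℓ = k then (1 : ℝ) else 0) / n) := by
    funext k
    congr 1
    exact Finset.sum_congr rfl fun ℓ hℓ => by rw [h ℓ (Finset.mem_range.1 hℓ)]
  rw [this]

lemma Ev_cnt {m : ℕ} (p : Fin m → ℝ) (δ : ℝ) (n : ℕ) (x : ℕ → Fin m) :
    Ev p δ n x ↔
      (((n : ℝ) : EReal) * KLdiv (fun k => ((cnt x n k : ℝ)) / n) p
        > ((Real.log (1 / δ)
            + ((m : ℝ) - 1) * Real.log (Real.exp 1 * (1 + (n : ℝ) / ((m : ℝ) - 1))) : ℝ)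
              : EReal)) := by
  unfold Ev
  have : (fun k => ((cnt x n k : ℝ)) / n)
      = (fun k => (∑ ℓ ∈ Finset.range n, if x ℓ = k then (1 : ℝ) else 0) / n) := by
    funext k
    rw [cnt_cast]
  rw [this]

open Classical in
/-- Part B : the combinatorial probability bound -/
lemma partB {m : ℕ} {p : Fin m → ℝ} (hp : ∀ k, 0 ≤ p k) (hm : 2 ≤ m)
    (hpsum : ∑ k, p k = 1) {δ : ℝ} (hδ : 0 < δ) (N : ℕ) :
    ∑ x ∈ Finset.univ.filter
        (fun x : Fin N → Fin m => ∃ n, 1 ≤ n ∧ n ≤ N ∧ Ev p δ n (extT (by omega) x)),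
      ∏ ℓ, p (x ℓ) ≤ δ := by
  classical
  have hm0 : 0 < m := by omega
  have hterm : ∀ x : Fin N → Fin m,
      (∃ n, 1 ≤ n ∧ n ≤ N ∧ Ev p δ n (extT hm0 x)) →
        ∏ ℓ, p (x ℓ) ≤ δ * ((∏ ℓ, p (x ℓ)) * VV p δ N (extT hm0 x)) := by
    intro x ⟨n, h1, h2, hev⟩
    rcases eq_or_lt_of_le (Finset.prod_nonneg (fun ℓ (_ : ℓ ∈ Finset.univ) => hp (x ℓ))) with
      h0 | h0
    · rw [← h0]
      simp
    · have good : ∀ k, cnt (extT hm0 x) n k ≠ 0 → 0 < p k := by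
        intro k hk
        obtain ⟨ℓ, hℓ, hxk⟩ := cnt_pos_elim hk
        have hℓN : ℓ < N := lt_of_lt_of_le hℓ h2
        have hval : extT hm0 x ℓ = x ⟨ℓ, hℓN⟩ := by simp [extT, hℓN]
        rw [← hxk, hval]
        rcases eq_or_lt_of_le (hp (x ⟨ℓ, hℓN⟩)) with hz | hz
        · exfalso
          have : ∏ ℓ', p (x ℓ') = 0 :=
            Finset.prod_eq_zero (Finset.mem_univ (⟨ℓ, hℓN⟩ : Fin N)) hz.symm
          rw [this] at h0
          exact lt_irrefl 0 h0
        · exact hz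
      have hev' := (Ev_cnt p δ n (extT hm0 x)).1 hev
      have hMart : 1 / δ ≤ Mart p (extT hm0 x) n := key_chain hm h1 good hδ hev'
      have hVV : 1 / δ ≤ VV p δ N (extT hm0 x) := VV_ge_of_hit p δ ⟨n, h2, hMart⟩
      have h1d : 1 ≤ δ * VV p δ N (extT hm0 x) := by
        rw [div_le_iff₀ hδ] at hVV
        linarith [hVV]
      calc ∏ ℓ, p (x ℓ) = (∏ ℓ, p (x ℓ)) * 1 := by rw [mul_one]
        _ ≤ (∏ ℓ, p (x ℓ)) * (δ * VV p δ N (extT hm0 x)) :=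
            mul_le_mul_of_nonneg_left h1d h0.le
        _ = δ * ((∏ ℓ, p (x ℓ)) * VV p δ N (extT hm0 x)) := by ring
  calc ∑ x ∈ Finset.univ.filter
        (fun x : Fin N → Fin m => ∃ n, 1 ≤ n ∧ n ≤ N ∧ Ev p δ n (extT hm0 x)),
      ∏ ℓ, p (x ℓ)
      ≤ ∑ x ∈ Finset.univ.filter
          (fun x : Fin N → Fin m => ∃ n, 1 ≤ n ∧ n ≤ N ∧ Ev p δ n (extT hm0 x)),
        δ * ((∏ ℓ, p (x ℓ)) * VV p δ N (extT hm0 x)) :=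
        Finset.sum_le_sum fun x hx => hterm x (Finset.mem_filter.1 hx).2
    _ ≤ ∑ x : Fin N → Fin m, δ * ((∏ ℓ, p (x ℓ)) * VV p δ N (extT hm0 x)) :=
        Finset.sum_le_sum_of_subset_of_nonneg (Finset.filter_subset _ _)
          (fun x _ _ => mul_nonneg hδ.le
            (mul_nonneg (Finset.prod_nonneg fun ℓ _ => hp _) (VV_nonneg hp δ N _)))
    _ = δ * ∑ x : Fin N → Fin m, (∏ ℓ, p (x ℓ)) * VV p δ N (extT hm0 x) := by
        rw [Finset.mul_sum]
    _ ≤ δ * 1 := mul_le_mul_of_nonneg_left (ville hp hm hpsum δ N) hδ.le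
    _ = δ := mul_one δ

end KLDeviationProof

open KLDeviationProof in
/-- time-uniform deviation inequality for the KL divergence between the
empirical distribution of i.i.d. categorical samples and the true distribution.
The samples are `X 0, X 1, …` (so the first `n` samples are `X ℓ` for `ℓ < n`), each with
law `p` on `{1, …, m}` (modeled as `Fin m`), mutually independent. -/
theorem kl_deviation_categorical
    {Ω : Type*} [MeasurableSpace Ω] (μ : Measure Ω) [IsProbabilityMeasure μ]
    (m : ℕ) (hm : 2 ≤ m)
    (p : Fin m → ℝ) (hp : ∀ k, 0 ≤ p k) (hpsum : ∑ k, p k = 1)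
    (X : ℕ → Ω → Fin m) (hXmeas : ∀ t, Measurable (X t))
    (hindep : iIndepFun X μ)
    (hlaw : ∀ t k, μ {ω | X t ω = k} = ENNReal.ofReal (p k))
    (δ : ℝ) (hδ : 0 < δ) (hδ1 : δ ≤ 1) :
    μ {ω | ∃ n : ℕ, 1 ≤ n ∧
        (((n : ℝ) : EReal) *
            KLdiv
              (fun k => (∑ ℓ ∈ Finset.range n, if X ℓ ω = k then (1 : ℝ) else 0) / n) p
          > ((Real.log (1 / δ)
              + ((m : ℝ) - 1) * Real.log (Real.exp 1 * (1 + (n : ℝ) / ((m : ℝ) - 1))) : ℝ)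
                : EReal))}
      ≤ ENNReal.ofReal δ := by
  classical
  have hm0 : 0 < m := by omega
  -- the finite-horizon events
  set S : ℕ → Set Ω := fun N =>
    {ω | (fun x : Fin N → Fin m => ∃ n, 1 ≤ n ∧ n ≤ N ∧ Ev p δ n (extT hm0 x))
      (fun ℓ : Fin N => X ℓ.1 ω)} with hS
  have hSiff : ∀ N (ω : Ω),
      ω ∈ S N ↔ ∃ n, 1 ≤ n ∧ n ≤ N ∧ Ev p δ n (fun ℓ : ℕ => X ℓ ω) := by
    intro N ω
    rw [hS]
    simp only [Set.mem_setOf_eq]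
    refine exists_congr fun n => and_congr_right fun h1 => and_congr_right fun h2 => ?_
    refine Ev_congr p δ n fun ℓ hℓ => ?_
    have hℓN : ℓ < N := lt_of_lt_of_le hℓ h2
    simp [extT, hℓN]
  -- the full event is the monotone union of the finite-horizon events
  have hE : {ω | ∃ n : ℕ, 1 ≤ n ∧
      (((n : ℝ) : EReal) *
          KLdiv
            (fun k => (∑ ℓ ∈ Finset.range n, if X ℓ ω = k then (1 : ℝ) else 0) / n) p
        > ((Real.log (1 / δ)
            + ((m : ℝ) - 1) * Real.log (Real.exp 1 * (1 + (n : ℝ) / ((m : ℝ) - 1))) : ℝ)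
              : EReal))} = ⋃ N, S N := by
    ext ω
    simp only [Set.mem_setOf_eq, Set.mem_iUnion]
    constructor
    · rintro ⟨n, h1, hev⟩
      exact ⟨n, (hSiff n ω).2 ⟨n, h1, le_refl n, hev⟩⟩
    · rintro ⟨N, hN⟩
      obtain ⟨n, h1, _, hev⟩ := (hSiff N ω).1 hN
      exact ⟨n, h1, hev⟩
  rw [hE]
  have hmono : Monotone S := by
    intro N N' hNN' ω hω
    obtain ⟨n, h1, h2, hev⟩ := (hSiff N ω).1 hω
    exact (hSiff N' ω).2 ⟨n, h1, le_trans h2 hNN', hev⟩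
  rw [hmono.directed_le.measure_iUnion]
  refine iSup_le fun N => ?_
  -- finite-horizon bound
  rw [hS]
  rw [measure_eq_sum μ p X hXmeas hindep hlaw N
    (fun x : Fin N → Fin m => ∃ n, 1 ≤ n ∧ n ≤ N ∧ Ev p δ n (extT hm0 x))]
  have hconv : ∑ x ∈ Finset.univ.filter
      (fun x : Fin N → Fin m => ∃ n, 1 ≤ n ∧ n ≤ N ∧ Ev p δ n (extT hm0 x)),
      ∏ ℓ : Fin N, ENNReal.ofReal (p (x ℓ))
      = ENNReal.ofReal (∑ x ∈ Finset.univ.filter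
          (fun x : Fin N → Fin m => ∃ n, 1 ≤ n ∧ n ≤ N ∧ Ev p δ n (extT hm0 x)),
          ∏ ℓ : Fin N, p (x ℓ)) := by
    rw [ENNReal.ofReal_sum_of_nonneg
      (fun x _ => Finset.prod_nonneg fun ℓ _ => hp (x ℓ))]
    exact Finset.sum_congr rfl fun x _ =>
      (ENNReal.ofReal_prod_of_nonneg fun ℓ _ => hp (x ℓ)).symm
  rw [hconv]
  exact ENNReal.ofReal_le_ofReal (partB hp hm hpsum hδ N)
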